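/- Let P be a finite nonempty (2+2)-free poset, and for p ∈ P let D_P(p) = {q ∈ P : p ≤_P q}. Suppose a ∈ P satisfies |D_P(a)| ≥ |D_P(q)| for all q ∈ P. Then a is a minimal element of P, and every element of P that is incomparable with a is also a minimal element of P. -/

import Mathlib

/-- A finite poset is `(2+2)`-free if it contains no induced subposet isomorphic to
the disjoint union of two 2-element chains. -/
def IsTTFree (β : Type*) [PartialOrder β] : Prop :=
  ¬ ∃ a b c d : β, a < b ∧ c < d ∧
    (¬ a ≤ c ∧ ¬ c ≤ a) ∧ (¬ a ≤ d ∧ ¬ d ≤ a) ∧ (¬ b ≤ c ∧ ¬ c ≤ b) ∧ (¬ b ≤ d ∧ ¬ d ≤ b)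

/-- in a finite nonempty `(2+2)`-free poset, if `a` maximizes
`|D_P(a)| = |{q : a ≤ q}|`, then `a` is minimal, and every element incomparable
with `a` is minimal as well. -/
theorem stmt8 (β : Type*) [Fintype β] [Nonempty β] [DecidableEq β] [PartialOrder β]
    [DecidableRel ((· ≤ ·) : β → β → Prop)] (hfree : IsTTFree β) (a : β)
    (ha : ∀ q : β, (Finset.univ.filter fun r => q ≤ r).card ≤
        (Finset.univ.filter fun r => a ≤ r).card) :
    (∀ q : β, ¬ q < a) ∧
      ∀ p : β, (¬ p ≤ a ∧ ¬ a ≤ p) → ∀ q : β, ¬ q < p := by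
  constructor
  · intro q hq
    have hsub : (Finset.univ.filter fun r => a ≤ r) ⊆ (Finset.univ.filter fun r => q ≤ r) := by
      intro r hr
      simp only [Finset.mem_filter, Finset.mem_univ, true_and] at hr ⊢
      exact hq.le.trans hr
    have hq' : q ∈ (Finset.univ.filter fun r => q ≤ r) := by simp
    have hq'' : q ∉ (Finset.univ.filter fun r => a ≤ r) := by
      simp only [Finset.mem_filter, Finset.mem_univ, true_and]
      exact fun h' => absurd (h'.trans_lt hq) (lt_irrefl a)
    have hlt := Finset.card_lt_card ((Finset.ssubset_iff_of_subset hsub).mpr ⟨q, hq', hq''⟩)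
    exact absurd (ha q) (not_le.mpr hlt)
  · rintro p ⟨hpa, hap⟩ q hq
    set S := Finset.univ.filter fun r => a ≤ r with hS
    set T := Finset.univ.filter fun r => q ≤ r with hT
    have hTS : T.card ≤ S.card := ha q
    have haq : ¬ a ≤ q := fun h => hap (h.trans hq.le)
    have hpT : p ∈ T := by simp [hT, hq.le]
    have hqT : q ∈ T := by simp [hT]
    have hpS : p ∉ S := by simp [hS, hap]
    have hqS : q ∉ S := by simp [hS, haq]
    have hpq : p ≠ q := hq.ne'
    have h2 : 2 ≤ (T \ S).card := by
      have hsub : ({p, q} : Finset β) ⊆ T \ S := by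
        intro x hx
        simp only [Finset.mem_insert, Finset.mem_singleton] at hx
        rcases hx with rfl | rfl <;> simp [Finset.mem_sdiff, hq.le, *]
      have : ({p, q} : Finset β).card = 2 := by
        rw [Finset.card_insert_of_notMem (by simp [hpq]), Finset.card_singleton]
      calc 2 = ({p, q} : Finset β).card := this.symm
        _ ≤ _ := Finset.card_le_card hsub
    have hST : 2 ≤ (S \ T).card := by
      have e1 := Finset.card_sdiff_add_card_inter S T
      have e2 := Finset.card_sdiff_add_card_inter T S
      rw [Finset.inter_comm] at e2
      omega
    obtain ⟨x, hxST, hxa⟩ := Finset.exists_mem_ne (s := S \ T) (by omega) a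
    rw [Finset.mem_sdiff] at hxST
    obtain ⟨hxS, hxT⟩ := hxST
    have hax : a ≤ x := by simpa [hS] using hxS
    have hqx : ¬ q ≤ x := by simpa [hT] using hxT
    exact hfree ⟨q, p, a, x, hq, lt_of_le_of_ne hax (Ne.symm hxa),
      ⟨fun h => hqx (h.trans hax), haq⟩,
      ⟨hqx, fun h => hap ((hax.trans h).trans hq.le)⟩,
      ⟨hpa, hap⟩,
      ⟨fun h => hqx (hq.le.trans h), fun h => hap (hax.trans h)⟩⟩
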